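/- arXiv:math/9907195 — 2 statements merged into one kernel-verified Lean document; each statement's English description precedes it below -/
import Mathlib

section
/- Suppose B ⊆ ℝ^d is a closed convex set with 0 ∈ B°, γ ∈ ℝ^d, e is a unit coordinate vector with ⟨γ,e⟩ = 1, and B is invariant under the oblique projection L x = x - ⟨x,e⟩γ (i.e., L(B) ⊆ B). Then for any z ∈ ∂B and any outward normal n to B at z, ⟨z,e⟩ < 0 implies ⟨γ,n⟩ ≤ 0. -/
/-- If a closed convex set `B ⊆ ℝ^d` with `0 ∈ B°` is invariant under the oblique
projection `L x = x - ⟪x, e⟫ γ`, where `e` is a coordinate unit vector with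
`⟪γ, e⟫ = 1`, then for `z ∈ ∂B` and any outward normal `n` to `B` at `z`,
`⟪z, e⟫ < 0` implies `⟪γ, n⟫ ≤ 0`. -/
theorem oblique_projection_invariance_normal {d : ℕ} (i : Fin d)
    (B : Set (EuclideanSpace ℝ (Fin d)))
    (hBclosed : IsClosed B) (hBconv : Convex ℝ B)
    (hB0 : (0 : EuclideanSpace ℝ (Fin d)) ∈ interior B)
    (γ : EuclideanSpace ℝ (Fin d))
    (hγe : (inner ℝ γ (EuclideanSpace.single i (1:ℝ)) : ℝ) = 1)
    (hinv : ∀ x ∈ B, x - (inner ℝ x (EuclideanSpace.single i (1:ℝ)) : ℝ) • γ ∈ B) :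
    ∀ z ∈ frontier B, ∀ n : EuclideanSpace ℝ (Fin d),
      (∀ y ∈ B, (inner ℝ (y - z) n : ℝ) ≤ 0) →
      (inner ℝ z (EuclideanSpace.single i (1:ℝ)) : ℝ) < 0 →
      (inner ℝ γ n : ℝ) ≤ 0 := by
  intro z hz n hn hze
  have hzB : z ∈ B := by
    have := frontier_subset_closure (s := B)
    rw [hBclosed.closure_eq] at this
    exact this hz
  have h1 := hn _ (hinv z hzB)
  have h2 : (z - (inner ℝ z (EuclideanSpace.single i (1:ℝ)) : ℝ) • γ) - z
      = (-(inner ℝ z (EuclideanSpace.single i (1:ℝ)) : ℝ)) • γ := by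
    module
  rw [h2, real_inner_smul_left] at h1
  nlinarith
end

section
/- Let ν : ℝ_+^d → [0,1] be continuously differentiable with bounded gradient, satisfying ⟨Dν(x), γ_i⟩ ≤ 0 for all x ∈ ℝ_+^d and i with x_i = 0, and ⟨Dν(x), γ_i⟩ < 0 strictly for x in a given compact set K ⊆ ℝ_+^d and i with x_i = 0, where ν has compact support. If δ_i > 0 with ∑ δ_i ≤ 1, and every x ∈ ℝ_+^d satisfies δ_i x ∈ K for some i, then μ(x) = ∑_{i=1}^∞ δ_i ν(δ_i x) is continuously differentiable with values in [0,1], sup_x ‖Dμ(x)‖ < ∞, and ⟨Dμ(x), γ_i⟩ < 0 for all x ∈ ℝ_+^d and i with x_i = 0. -/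
set_option maxHeartbeats 1000000


/-- Construction of the function `μ` of Lemma 2.2: summing scaled copies
`μ(x) = ∑ δᵢ ν(δᵢ x)` of a `C¹` function `ν` with compact support, values in `[0,1]`,
bounded gradient, `⟨Dν(x), γᵢ⟩ ≤ 0` on the boundary of the orthant and strictly
negative on a compact set `K`, and the scalings `δᵢ x` covering `K`, yields a `C¹`
function with values in `[0,1]`, bounded gradient, and `⟨Dμ(x), γᵢ⟩ < 0` whenever
`xᵢ = 0`. -/
theorem sum_scaled_boundary_function {d : ℕ}
    (orthant : Set (EuclideanSpace ℝ (Fin d)))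
    (horthant : orthant = {x : EuclideanSpace ℝ (Fin d) | ∀ i, 0 ≤ x i})
    (γ : Fin d → EuclideanSpace ℝ (Fin d))
    (K : Set (EuclideanSpace ℝ (Fin d))) (hK : IsCompact K) (hKsub : K ⊆ orthant)
    (ν : EuclideanSpace ℝ (Fin d) → ℝ)
    (hν : ContDiff ℝ 1 ν) (hsupp : HasCompactSupport ν)
    (hrange : ∀ x, ν x ∈ Set.Icc (0:ℝ) 1)
    (hgradbd : ∃ C : ℝ, ∀ x, ‖fderiv ℝ ν x‖ ≤ C)
    (hweak : ∀ x ∈ orthant, ∀ i, x i = 0 → fderiv ℝ ν x (γ i) ≤ 0)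
    (hstrict : ∀ x ∈ K, ∀ i, x i = 0 → fderiv ℝ ν x (γ i) < 0)
    (δs : ℕ → ℝ) (hδpos : ∀ n, 0 < δs n) (hδsum : Summable δs)
    (hδle : (∑' n, δs n) ≤ 1)
    (hcover : ∀ x ∈ orthant, ∃ n, δs n • x ∈ K)
    (μ : EuclideanSpace ℝ (Fin d) → ℝ)
    (hμ : ∀ x, μ x = ∑' n, δs n * ν (δs n • x)) :
    ContDiff ℝ 1 μ ∧
    (∀ x ∈ orthant, μ x ∈ Set.Icc (0:ℝ) 1) ∧
    (∃ C : ℝ, ∀ x, ‖fderiv ℝ μ x‖ ≤ C) ∧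
    (∀ x ∈ orthant, ∀ i, x i = 0 → fderiv ℝ μ x (γ i) < 0) := by
  classical
  obtain ⟨C, hC⟩ := hgradbd
  set C' : ℝ := max C 1 with hC'def
  have hC' : ∀ x, ‖fderiv ℝ ν x‖ ≤ C' := fun x => (hC x).trans (le_max_left _ _)
  have hC'1 : (1:ℝ) ≤ C' := le_max_right _ _
  have hC'0 : (0:ℝ) ≤ C' := le_trans zero_le_one hC'1
  have hδ1 : ∀ n, δs n ≤ 1 := fun n =>
    le_trans (hδsum.le_tsum n fun m _ => (hδpos m).le) hδle
  have hν' : Differentiable ℝ ν := hν.differentiable one_ne_zero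
  set F : ℕ → EuclideanSpace ℝ (Fin d) → ℝ := fun n x => δs n * ν (δs n • x) with hF
  set f' : ℕ → EuclideanSpace ℝ (Fin d) → (EuclideanSpace ℝ (Fin d) →L[ℝ] ℝ) := fun n x => (δs n * δs n) • fderiv ℝ ν (δs n • x) with hf'
  have hμeq : μ = fun x => ∑' n, F n x := funext hμ
  -- derivative of each term
  have hFd : ∀ n x, HasFDerivAt (F n) (f' n x) x := by
    intro n x
    have h1 : HasFDerivAt (fun y : EuclideanSpace ℝ (Fin d) => δs n • y)
        (δs n • ContinuousLinearMap.id ℝ (EuclideanSpace ℝ (Fin d))) x := (hasFDerivAt_id x).const_smul (δs n)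
    have h2 := ((hν' (δs n • x)).hasFDerivAt).comp x h1
    have h3 := h2.const_smul (δs n)
    refine HasFDerivAt.congr_fderiv h3 ?_
    ext v
    simp [f', smul_eq_mul, map_smul]
    ring
  have hf'bd : ∀ n x, ‖f' n x‖ ≤ δs n * C' := by
    intro n x
    have h1 : ‖f' n x‖ = (δs n * δs n) * ‖fderiv ℝ ν (δs n • x)‖ := by
      show ‖(δs n * δs n) • fderiv ℝ ν (δs n • x)‖ = _
      rw [norm_smul, Real.norm_eq_abs, abs_of_pos (mul_pos (hδpos n) (hδpos n))]
    have h2 := hC' (δs n • x)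
    have h3 := hδpos n
    have h4 := hδ1 n
    have h5 : (0:ℝ) ≤ ‖fderiv ℝ ν (δs n • x)‖ := norm_nonneg _
    nlinarith [mul_nonneg (mul_nonneg h3.le h3.le) (sub_nonneg.2 h2),
      mul_nonneg (mul_nonneg h3.le (sub_nonneg.2 h4)) hC'0]
  have hu : Summable (fun n => δs n * C') := hδsum.mul_right C'
  have hF0 : Summable fun n => F n 0 := by
    simpa [F, smul_zero] using hδsum.mul_right (ν 0)
  have hFsum : ∀ x, Summable fun n => F n x := fun x =>
    summable_of_summable_hasFDerivAt hu hFd hf'bd hF0 x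
  have hfderiv : ∀ x, fderiv ℝ μ x = ∑' n, f' n x := by
    intro x
    rw [hμeq]
    exact (hasFDerivAt_tsum hu hFd hf'bd hF0 x).fderiv
  have hdiff : Differentiable ℝ μ := hμeq ▸ differentiable_tsum hu hFd hf'bd
  have hf'sum : ∀ x, Summable fun n => f' n x := fun x =>
    Summable.of_norm_bounded hu (fun n => hf'bd n x)
  refine ⟨?_, ?_, ?_, ?_⟩
  · -- C¹
    rw [contDiff_one_iff_fderiv]
    refine ⟨hdiff, ?_⟩
    have : fderiv ℝ μ = fun x => ∑' n, f' n x := funext hfderiv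
    rw [this]
    refine continuous_tsum ?_ hu (fun n x => hf'bd n x)
    intro n
    exact ((hν.continuous_fderiv one_ne_zero).comp
      ((continuous_const (y := δs n)).smul continuous_id)).const_smul (δs n * δs n)
  · -- range
    intro x _
    rw [hμ x]
    constructor
    · exact tsum_nonneg fun n => mul_nonneg (hδpos n).le (hrange _).1
    · calc (∑' n, δs n * ν (δs n • x)) ≤ ∑' n, δs n := by
            refine Summable.tsum_le_tsum (fun n => ?_) (hFsum x) hδsum
            nlinarith [(hrange (δs n • x)).1, (hrange (δs n • x)).2, hδpos n]
        _ ≤ 1 := hδle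
  · -- bounded gradient
    refine ⟨C', fun x => ?_⟩
    rw [hfderiv x]
    calc ‖∑' n, f' n x‖ ≤ ∑' n, ‖f' n x‖ :=
          norm_tsum_le_tsum_norm (Summable.of_nonneg_of_le
            (fun n => norm_nonneg _) (fun n => hf'bd n x) hu)
      _ ≤ ∑' n, δs n * C' :=
          Summable.tsum_le_tsum (fun n => hf'bd n x)
            (Summable.of_nonneg_of_le (fun n => norm_nonneg _) (fun n => hf'bd n x) hu) hu
      _ = (∑' n, δs n) * C' := tsum_mul_right
      _ ≤ 1 * C' := mul_le_mul_of_nonneg_right hδle hC'0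
      _ = C' := one_mul _
  · -- strict negativity
    intro x hx i hxi
    have hxmem : ∀ n, δs n • x ∈ orthant := by
      intro n
      rw [horthant]
      intro j
      have : (0:ℝ) ≤ x j := by rw [horthant] at hx; exact hx j
      have : (δs n • x) j = δs n * x j := rfl
      rw [this]
      exact mul_nonneg (hδpos n).le ‹0 ≤ x j›
    have hxzero : ∀ n, (δs n • x) i = 0 := by
      intro n
      have : (δs n • x) i = δs n * x i := rfl
      rw [this, hxi, mul_zero]
    have happly : fderiv ℝ μ x (γ i) = ∑' n, f' n x (γ i) := by
      rw [hfderiv x]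
      have h := (ContinuousLinearMap.apply ℝ ℝ (γ i)).map_tsum (hf'sum x)
      simpa using h
    rw [happly]
    obtain ⟨n₀, hn₀⟩ := hcover x hx
    have hle : ∀ n, f' n x (γ i) ≤ 0 := by
      intro n
      have h1 : fderiv ℝ ν (δs n • x) (γ i) ≤ 0 := hweak _ (hxmem n) i (hxzero n)
      have : f' n x (γ i) = (δs n * δs n) * fderiv ℝ ν (δs n • x) (γ i) := by
        simp [hf']
      rw [this]
      exact mul_nonpos_of_nonneg_of_nonpos (mul_pos (hδpos n) (hδpos n)).le h1
    have hlt : f' n₀ x (γ i) < 0 := by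
      have h1 : fderiv ℝ ν (δs n₀ • x) (γ i) < 0 := hstrict _ hn₀ i (hxzero n₀)
      have : f' n₀ x (γ i) = (δs n₀ * δs n₀) * fderiv ℝ ν (δs n₀ • x) (γ i) := by
        simp [hf']
      rw [this]
      exact mul_neg_of_pos_of_neg (mul_pos (hδpos n₀) (hδpos n₀)) h1
    have hgsum : Summable fun n => f' n x (γ i) := by
      have := (ContinuousLinearMap.apply ℝ ℝ (γ i)).summable (hf'sum x)
      simpa using this
    have := Summable.tsum_lt_tsum (f := fun n => f' n x (γ i)) (g := fun _ => (0:ℝ))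
      (fun n => hle n) hlt hgsum summable_zero
    simpa using this
end
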